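/- (Chebyshev description, second kind) Suppose a₁² − b₀²p = t^{2r} for some nonnegative integer r. Then for all n ≥ 0, bₙ = b₀·t^{rn}·Uₙ(a₁/t^r) in ℂ[t, t^{-1}], where Uₙ is the n-th Chebyshev polynomial of the second kind. -/

import Mathlib

open Polynomial

namespace ChebyshevSecondAux

/-- Injectivity of `(α, β) ↦ of α + of β * root` in `AdjoinRoot (X^2 - C p)`. -/
lemma coeff_unique (p : Polynomial ℂ) (α β γ δ : Polynomial ℂ)
    (h : AdjoinRoot.of ((X : Polynomial (Polynomial ℂ)) ^ 2 - C p) α +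
          AdjoinRoot.of (X ^ 2 - C p) β * AdjoinRoot.root (X ^ 2 - C p) =
        AdjoinRoot.of (X ^ 2 - C p) γ +
          AdjoinRoot.of (X ^ 2 - C p) δ * AdjoinRoot.root (X ^ 2 - C p)) :
    α = γ ∧ β = δ := by
  set g : Polynomial (Polynomial ℂ) := X ^ 2 - C p with hg
  have hmonic : g.Monic := monic_X_pow_sub_C p (by norm_num)
  have hdeg : g.degree = 2 := by
    simpa using degree_X_pow_sub_C (n := 2) (by norm_num) p
  have key : ∀ x y : Polynomial ℂ,
      AdjoinRoot.of g x + AdjoinRoot.of g y * AdjoinRoot.root g =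
        AdjoinRoot.mk g (C x + C y * X) := by
    intro x y
    simp only [map_add, map_mul, AdjoinRoot.mk_C, AdjoinRoot.mk_X]
  rw [key, key] at h
  have h2 : AdjoinRoot.modByMonicHom hmonic (AdjoinRoot.mk g (C α + C β * X)) =
      AdjoinRoot.modByMonicHom hmonic (AdjoinRoot.mk g (C γ + C δ * X)) := by rw [h]
  rw [AdjoinRoot.modByMonicHom_mk, AdjoinRoot.modByMonicHom_mk] at h2
  have hsmall : ∀ x y : Polynomial ℂ, (C x + C y * X).degree < g.degree := by
    intro x y
    rw [hdeg]
    apply lt_of_le_of_lt (degree_add_le _ _)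
    apply max_lt (lt_of_le_of_lt degree_C_le (by norm_num))
    apply lt_of_le_of_lt (degree_mul_le _ _)
    calc (C y).degree + (X : Polynomial (Polynomial ℂ)).degree ≤ 0 + 1 :=
          add_le_add degree_C_le (le_of_eq degree_X)
      _ < 2 := by norm_num
  rw [(modByMonic_eq_self_iff hmonic).2 (hsmall α β),
      (modByMonic_eq_self_iff hmonic).2 (hsmall γ δ)] at h2
  constructor
  · have := congrArg (fun q => Polynomial.coeff q 0) h2
    simpa using this
  · have := congrArg (fun q => Polynomial.coeff q 1) h2
    simpa using this

end ChebyshevSecondAux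

theorem chebyshev_second_kind (p : Polynomial ℂ) (a b : ℕ → Polynomial ℂ) (r : ℕ)
    (ha0 : a 0 = 1)
    (hdef : ∀ n : ℕ,
      AdjoinRoot.of ((X : Polynomial (Polynomial ℂ)) ^ 2 - C p) (a (n + 1)) +
        AdjoinRoot.of (X ^ 2 - C p) (b n) * AdjoinRoot.root (X ^ 2 - C p) =
      (AdjoinRoot.of (X ^ 2 - C p) (a 1) +
        AdjoinRoot.of (X ^ 2 - C p) (b 0) * AdjoinRoot.root (X ^ 2 - C p)) ^ (n + 1))
    (hr : a 1 ^ 2 - b 0 ^ 2 * p = X ^ (2 * r)) :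
    ∀ n : ℕ,
      Polynomial.toLaurent (b n) =
        Polynomial.toLaurent (b 0) * LaurentPolynomial.T ((r : ℤ) * n) *
          Polynomial.aeval
            (Polynomial.toLaurent (a 1) * LaurentPolynomial.T (-(r : ℤ)))
            (Polynomial.Chebyshev.U ℂ n) := by
  set g : Polynomial (Polynomial ℂ) := X ^ 2 - C p with hgdef
  have hroot2 : (AdjoinRoot.root g) ^ 2 = AdjoinRoot.of g p := by
    have := AdjoinRoot.eval₂_root g
    rw [hgdef] at this
    simp only [eval₂_sub, eval₂_X_pow, eval₂_C] at this
    exact sub_eq_zero.mp this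
  -- coefficient recurrences
  have hstep : ∀ n : ℕ, a (n + 2) = a (n + 1) * a 1 + b n * (b 0 * p) ∧
      b (n + 1) = a (n + 1) * b 0 + b n * a 1 := by
    intro n
    apply ChebyshevSecondAux.coeff_unique p
    show AdjoinRoot.of g _ + AdjoinRoot.of g _ * AdjoinRoot.root g =
      AdjoinRoot.of g _ + AdjoinRoot.of g _ * AdjoinRoot.root g
    rw [show n + 2 = n + 1 + 1 from rfl, hdef (n + 1), pow_succ, ← hdef n]
    simp only [map_add, map_mul]
    ring_nf
    linear_combination (AdjoinRoot.of g (b n) * AdjoinRoot.of g (b 0)) * hroot2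
  have brec : ∀ n : ℕ, b (n + 2) = 2 * a 1 * b (n + 1) - X ^ (2 * r) * b n := by
    intro n
    have h1 := (hstep (n + 1)).2
    have h2 := (hstep n).1
    have h3 := (hstep n).2
    rw [show n + 1 + 1 = n + 2 from rfl] at h1
    rw [h1, h2]
    linear_combination (-(a 1)) * h3 - b n * hr
  have b1 : b 1 = a 1 * b 0 + b 0 * a 1 := by simpa using (hstep 0).2
  -- Laurent side
  set A : LaurentPolynomial ℂ := Polynomial.toLaurent (a 1) with hA
  set B : LaurentPolynomial ℂ := Polynomial.toLaurent (b 0) with hB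
  intro n
  induction n using Nat.twoStepInduction with
  | zero => simp [Polynomial.Chebyshev.U_zero]; rfl
  | one =>
    have : Polynomial.toLaurent (b 1) = 2 * A * B := by
      rw [b1]; simp only [map_add, map_mul]; ring
    rw [this]
    rw [show ((1 : ℕ) : ℤ) = 1 by norm_num, Polynomial.Chebyshev.U_one]
    simp only [map_mul, map_ofNat, Polynomial.aeval_X]
    rw [mul_one]
    rw [show B * LaurentPolynomial.T ((r : ℤ)) * (2 * (A * LaurentPolynomial.T (-(r : ℤ)))) =
      2 * A * B * (LaurentPolynomial.T ((r : ℤ)) * LaurentPolynomial.T (-(r : ℤ))) by ring,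
      ← LaurentPolynomial.T_add]
    simp
  | more n ih1 ih2 =>
    have hc : Polynomial.toLaurent (b (n + 2)) =
        2 * A * Polynomial.toLaurent (b (n + 1)) -
          LaurentPolynomial.T ((2 * r : ℕ) : ℤ) * Polynomial.toLaurent (b n) := by
      rw [brec n]
      simp only [map_sub, map_mul, map_ofNat, Polynomial.toLaurent_X_pow]
      rfl
    have hcastU : Polynomial.Chebyshev.U ℂ ((n + 2 : ℕ) : ℤ) =
        2 * X * Polynomial.Chebyshev.U ℂ ((n + 1 : ℕ) : ℤ) -
          Polynomial.Chebyshev.U ℂ (n : ℤ) := by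
      push_cast
      exact Polynomial.Chebyshev.U_add_two ℂ n
    rw [hc, ih1, ih2, hcastU]
    simp only [map_sub, map_mul, map_ofNat, Polynomial.aeval_X]
    have h1 : (LaurentPolynomial.T ((r : ℤ) * ((n : ℤ) + 1)) : LaurentPolynomial ℂ) =
        LaurentPolynomial.T ((r : ℤ) * (n : ℤ)) * LaurentPolynomial.T ((r : ℤ)) := by
      rw [← LaurentPolynomial.T_add]; congr 1 <;> ring
    have h2 : (LaurentPolynomial.T ((r : ℤ) * ((n : ℤ) + 2)) : LaurentPolynomial ℂ) =
        LaurentPolynomial.T ((r : ℤ) * (n : ℤ)) * LaurentPolynomial.T ((r : ℤ)) *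
          LaurentPolynomial.T ((r : ℤ)) := by
      rw [mul_assoc, ← LaurentPolynomial.T_add, ← LaurentPolynomial.T_add]; congr 1 <;> ring
    have h3 : (LaurentPolynomial.T ((2 * r : ℕ) : ℤ) : LaurentPolynomial ℂ) =
        LaurentPolynomial.T ((r : ℤ)) * LaurentPolynomial.T ((r : ℤ)) := by
      rw [← LaurentPolynomial.T_add]; congr 1 <;> push_cast <;> ring
    have h4 : (LaurentPolynomial.T ((r : ℤ)) : LaurentPolynomial ℂ) *
        LaurentPolynomial.T (-(r : ℤ)) = 1 := by
      rw [← LaurentPolynomial.T_add]; simp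
    have e1 : ((r : ℤ) * ((n : ℕ) + 2 : ℕ)) = (r : ℤ) * ((n : ℤ) + 2) := by push_cast; ring
    have e2 : ((r : ℤ) * ((n : ℕ) + 1 : ℕ)) = (r : ℤ) * ((n : ℤ) + 1) := by push_cast; ring
    rw [e1, e2, h1, h2, h3]
    linear_combination (-(2 * A * B * LaurentPolynomial.T ((r : ℤ) * (n : ℤ)) *
      LaurentPolynomial.T ((r : ℤ)) *
      (Polynomial.aeval (A * LaurentPolynomial.T (-(r : ℤ))))
        (Polynomial.Chebyshev.U ℂ ((n + 1 : ℕ) : ℤ)))) * h4
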